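/- With (T, X, Y) drawn from the Razborov distribution (n = 4l−1) and A, B {0,1}-valued random variables forming the Markov chain A ↔ X ↔ Y ↔ B, it holds that Pr[A = B = 1 and X ∩ Y = ∅] = (3/4)·E_{t=(t₁,t₂,{i})←T}[ Pr[A=1 | T=t, i∉X] · Pr[B=1 | T=t, i∉Y] ]. -/

import Mathlib

open scoped BigOperators ENNReal
open Classical

noncomputable section

/-- A valid value `t = (t₁, t₂, i)` of the random partition `T`:
`t₁, t₂` are disjoint sets of size `2l − 1` not containing `i`
(together with `{i}` they partition `[n]` when `n = 4l − 1`). -/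
def ValidT (l : ℕ) {n : ℕ} (t : Finset (Fin n) × Finset (Fin n) × Fin n) : Prop :=
  t.1.card = 2 * l - 1 ∧ t.2.1.card = 2 * l - 1 ∧ Disjoint t.1 t.2.1 ∧
    t.2.2 ∉ t.1 ∧ t.2.2 ∉ t.2.1

/-- The support of the Razborov distribution: triples `(t, x, y)` with `t` a valid
partition, `x ⊆ t₁ ∪ {i}` of size `l`, and `y ⊆ t₂ ∪ {i}` of size `l`. -/
def razSupp (l n : ℕ) :
    Finset ((Finset (Fin n) × Finset (Fin n) × Fin n) × Finset (Fin n) × Finset (Fin n)) :=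
  Finset.univ.filter (fun q =>
    ValidT l q.1 ∧ q.2.1 ⊆ insert q.1.2.2 q.1.1 ∧ q.2.1.card = l ∧
      q.2.2 ⊆ insert q.1.2.2 q.1.2.1 ∧ q.2.2.card = l)

/-- The Razborov distribution, as the joint distribution of `(T, X, Y)`:
uniform over its support (all conditional fibers have equal size). -/
def razDist (l n : ℕ) :
    (Finset (Fin n) × Finset (Fin n) × Fin n) × Finset (Fin n) × Finset (Fin n) → ℝ :=
  fun q => if q ∈ razSupp l n then 1 / ((razSupp l n).card : ℝ) else 0

/-- The marginal of the Razborov distribution on `(X, Y)`. -/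
def razXY (l n : ℕ) : Finset (Fin n) × Finset (Fin n) → ℝ :=
  fun p => ∑ t : Finset (Fin n) × Finset (Fin n) × Fin n, razDist l n (t, p.1, p.2)

/-- The set-disjointness function as a relation: `(x, y, z) ∈ disjRel` iff
`z = DISJ(x,y)`, i.e. `z = true` iff `x ∩ y = ∅`. -/
def disjRel (n : ℕ) : Set (Finset (Fin n) × Finset (Fin n) × Bool) :=
  {q | q.2.2 = decide (q.1 ∩ q.2.1 = ∅)}


variable {n : ℕ}

/-- `Pr[T = t]` under the Razborov distribution. -/
def przT (l n : ℕ) (t : Finset (Fin n) × Finset (Fin n) × Fin n) : ℝ :=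
  ∑ p : Finset (Fin n) × Finset (Fin n), razDist l n (t, p.1, p.2)

/-- `Pr[A = 1 ∣ T = t, I ∈ X]`, where `A ↔ X ↔ Y ↔ B` with `Pr[A=1∣X=x] = a x`. -/
def prA1givenInX (l n : ℕ) (a : Finset (Fin n) → ℝ)
    (t : Finset (Fin n) × Finset (Fin n) × Fin n) : ℝ :=
  (∑ p : Finset (Fin n) × Finset (Fin n),
      if t.2.2 ∈ p.1 then razDist l n (t, p.1, p.2) * a p.1 else 0) /
  (∑ p : Finset (Fin n) × Finset (Fin n),
      if t.2.2 ∈ p.1 then razDist l n (t, p.1, p.2) else 0)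

/-- `Pr[B = 1 ∣ T = t, I ∈ Y]`, where `A ↔ X ↔ Y ↔ B` with `Pr[B=1∣Y=y] = b y`. -/
def prB1givenInY (l n : ℕ) (b : Finset (Fin n) → ℝ)
    (t : Finset (Fin n) × Finset (Fin n) × Fin n) : ℝ :=
  (∑ p : Finset (Fin n) × Finset (Fin n),
      if t.2.2 ∈ p.2 then razDist l n (t, p.1, p.2) * b p.2 else 0) /
  (∑ p : Finset (Fin n) × Finset (Fin n),
      if t.2.2 ∈ p.2 then razDist l n (t, p.1, p.2) else 0)

/-- `Pr[A = 1 ∣ T = t, I ∉ X]`. -/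
def prA1givenNotInX (l n : ℕ) (a : Finset (Fin n) → ℝ)
    (t : Finset (Fin n) × Finset (Fin n) × Fin n) : ℝ :=
  (∑ p : Finset (Fin n) × Finset (Fin n),
      if t.2.2 ∉ p.1 then razDist l n (t, p.1, p.2) * a p.1 else 0) /
  (∑ p : Finset (Fin n) × Finset (Fin n),
      if t.2.2 ∉ p.1 then razDist l n (t, p.1, p.2) else 0)

/-- `Pr[B = 1 ∣ T = t, I ∉ Y]`. -/
def prB1givenNotInY (l n : ℕ) (b : Finset (Fin n) → ℝ)
    (t : Finset (Fin n) × Finset (Fin n) × Fin n) : ℝ :=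
  (∑ p : Finset (Fin n) × Finset (Fin n),
      if t.2.2 ∉ p.2 then razDist l n (t, p.1, p.2) * b p.2 else 0) /
  (∑ p : Finset (Fin n) × Finset (Fin n),
      if t.2.2 ∉ p.2 then razDist l n (t, p.1, p.2) else 0)



lemma powersetCard_erase_eq (l : ℕ) (S : Finset (Fin n)) (i : Fin n) :
    (S.erase i).powersetCard l = (S.powersetCard l).filter (fun x => i ∉ x) := by
  ext x
  simp only [Finset.mem_powersetCard, Finset.mem_filter, Finset.subset_erase]
  tauto

lemma powersetCard_insert_filter_not (l : ℕ) (S : Finset (Fin n)) (i : Fin n) (hi : i ∉ S) :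
    ((insert i S).powersetCard l).filter (fun x => i ∉ x) = S.powersetCard l := by
  ext x
  simp only [Finset.mem_powersetCard, Finset.mem_filter]
  constructor
  · rintro ⟨⟨hsub, hcard⟩, hix⟩
    exact ⟨(Finset.subset_insert_iff_of_notMem hix).mp hsub, hcard⟩
  · rintro ⟨hsub, hcard⟩
    exact ⟨⟨hsub.trans (Finset.subset_insert _ _), hcard⟩, fun h => hi (hsub h)⟩

lemma raz_core (l : ℕ) (S : Finset (Fin n)) (hS : S.card = 2 * l)
    (f : Finset (Fin n) → ℝ) :
    ∑ i ∈ S, ∑ x ∈ (S.powersetCard l).filter (fun x => i ∈ x), f x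
      = ∑ i ∈ S, ∑ x ∈ (S.erase i).powersetCard l, f x := by
  have key : ∀ x ∈ S.powersetCard l, (S ∩ x).card = l ∧ (S \ x).card = l := by
    intro x hx
    rw [Finset.mem_powersetCard] at hx
    constructor
    · rw [Finset.inter_eq_right.mpr hx.1, hx.2]
    · rw [Finset.card_sdiff_of_subset hx.1, hx.2, hS]; omega
  have L : ∑ i ∈ S, ∑ x ∈ (S.powersetCard l).filter (fun x => i ∈ x), f x
      = ∑ x ∈ S.powersetCard l, (l : ℝ) * f x := by
    simp only [Finset.sum_filter]
    rw [Finset.sum_comm]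
    refine Finset.sum_congr rfl fun x hx => ?_
    rw [Finset.sum_ite_mem, Finset.sum_const, (key x hx).1]
    simp [mul_comm]
  have R : ∑ i ∈ S, ∑ x ∈ (S.erase i).powersetCard l, f x
      = ∑ x ∈ S.powersetCard l, (l : ℝ) * f x := by
    simp only [powersetCard_erase_eq, Finset.sum_filter]
    rw [Finset.sum_comm]
    refine Finset.sum_congr rfl fun x hx => ?_
    have h1 : ∀ i ∈ S, (if i ∉ x then f x else 0) = (if i ∈ S \ x then f x else 0) := by
      intro i hi
      by_cases h : i ∈ x <;> simp [h, hi]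
    rw [Finset.sum_congr rfl h1, Finset.sum_ite_mem, Finset.inter_eq_right.mpr Finset.sdiff_subset,
      Finset.sum_const, (key x hx).2]
    simp [mul_comm]
  rw [L, R]




lemma validT_t1_eq {l : ℕ} (hl : 0 < l) (hn : n = 4 * l - 1)
    {t₁ t₂ : Finset (Fin n)} {i : Fin n} (h : ValidT l (t₁, t₂, i)) :
    t₁ = (insert i t₂)ᶜ := by
  obtain ⟨h1, h2, h3, h4, h5⟩ := h
  have hsub : t₁ ⊆ (insert i t₂)ᶜ := by
    intro x hx
    simp only [Finset.mem_compl, Finset.mem_insert, not_or]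
    exact ⟨fun he => h4 (he ▸ hx), fun hx2 => (Finset.disjoint_left.mp h3 hx) hx2⟩
  apply Finset.eq_of_subset_of_card_le hsub
  rw [Finset.card_compl, Finset.card_insert_of_notMem h5, h2, Fintype.card_fin, h1]
  omega

lemma validT_t2_eq {l : ℕ} (hl : 0 < l) (hn : n = 4 * l - 1)
    {t₁ t₂ : Finset (Fin n)} {i : Fin n} (h : ValidT l (t₁, t₂, i)) :
    t₂ = (insert i t₁)ᶜ := by
  obtain ⟨h1, h2, h3, h4, h5⟩ := h
  have hsub : t₂ ⊆ (insert i t₁)ᶜ := by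
    intro x hx
    simp only [Finset.mem_compl, Finset.mem_insert, not_or]
    exact ⟨fun he => h5 (he ▸ hx), fun hx2 => (Finset.disjoint_right.mp h3 hx) hx2⟩
  apply Finset.eq_of_subset_of_card_le hsub
  rw [Finset.card_compl, Finset.card_insert_of_notMem h4, h1, Fintype.card_fin, h2]
  omega

lemma validT_iff_right {l : ℕ} (hl : 0 < l) (hn : n = 4 * l - 1) (t₂ : Finset (Fin n)) (i : Fin n) :
    ValidT l ((insert i t₂)ᶜ, t₂, i) ↔ (t₂.card = 2 * l - 1 ∧ i ∉ t₂) := by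
  constructor
  · rintro ⟨h1, h2, h3, h4, h5⟩; exact ⟨h2, h5⟩
  · rintro ⟨h2, h5⟩
    refine ⟨?_, h2, ?_, ?_, h5⟩
    · rw [Finset.card_compl, Finset.card_insert_of_notMem h5, h2, Fintype.card_fin]
      omega
    · rw [Finset.disjoint_left]
      intro x hx hx2
      simp only [Finset.mem_compl, Finset.mem_insert, not_or] at hx
      exact hx.2 hx2
    · simp

lemma validT_iff_left {l : ℕ} (hl : 0 < l) (hn : n = 4 * l - 1) (t₁ : Finset (Fin n)) (i : Fin n) :
    ValidT l (t₁, (insert i t₁)ᶜ, i) ↔ (t₁.card = 2 * l - 1 ∧ i ∉ t₁) := by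
  constructor
  · rintro ⟨h1, h2, h3, h4, h5⟩; exact ⟨h1, h4⟩
  · rintro ⟨h1, h4⟩
    refine ⟨h1, ?_, ?_, h4, ?_⟩
    · rw [Finset.card_compl, Finset.card_insert_of_notMem h4, h1, Fintype.card_fin]
      omega
    · rw [Finset.disjoint_right]
      intro x hx hx2
      simp only [Finset.mem_compl, Finset.mem_insert, not_or] at hx
      exact hx.2 hx2
    · simp

lemma sum_valid_right {l : ℕ} (hl : 0 < l) (hn : n = 4 * l - 1)
    (F : Finset (Fin n) × Finset (Fin n) × Fin n → ℝ) :
    (∑ t : Finset (Fin n) × Finset (Fin n) × Fin n, if ValidT l t then F t else 0)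
      = ∑ t₂ : Finset (Fin n), if t₂.card = 2 * l - 1 then
          ∑ i ∈ t₂ᶜ, F ((insert i t₂)ᶜ, t₂, i) else 0 := by
  rw [Fintype.sum_prod_type, Finset.sum_comm]
  rw [Fintype.sum_prod_type]
  refine Finset.sum_congr rfl fun t₂ _ => ?_
  have inner : ∀ i : Fin n, (∑ t₁ : Finset (Fin n), if ValidT l (t₁, t₂, i) then F (t₁, t₂, i) else 0)
      = if t₂.card = 2 * l - 1 ∧ i ∉ t₂ then F ((insert i t₂)ᶜ, t₂, i) else 0 := by
    intro i
    rw [Finset.sum_eq_single ((insert i t₂)ᶜ)]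
    · exact if_congr (validT_iff_right hl hn _ _) rfl rfl
    · intro t₁ _ hne
      rw [if_neg (fun hv => hne (validT_t1_eq hl hn hv))]
    · intro h; exact absurd (Finset.mem_univ _) h
  simp only [inner]
  by_cases hc : t₂.card = 2 * l - 1
  · simp only [hc, true_and, if_true]
    rw [← Finset.sum_filter]
    congr 1
    ext i
    simp
  · simp [hc]

lemma sum_valid_left {l : ℕ} (hl : 0 < l) (hn : n = 4 * l - 1)
    (F : Finset (Fin n) × Finset (Fin n) × Fin n → ℝ) :
    (∑ t : Finset (Fin n) × Finset (Fin n) × Fin n, if ValidT l t then F t else 0)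
      = ∑ t₁ : Finset (Fin n), if t₁.card = 2 * l - 1 then
          ∑ i ∈ t₁ᶜ, F (t₁, (insert i t₁)ᶜ, i) else 0 := by
  rw [Fintype.sum_prod_type]
  refine Finset.sum_congr rfl fun t₁ _ => ?_
  rw [Fintype.sum_prod_type, Finset.sum_comm]
  have inner : ∀ i : Fin n, (∑ t₂ : Finset (Fin n), if ValidT l (t₁, t₂, i) then F (t₁, t₂, i) else 0)
      = if t₁.card = 2 * l - 1 ∧ i ∉ t₁ then F (t₁, (insert i t₁)ᶜ, i) else 0 := by
    intro i
    rw [Finset.sum_eq_single ((insert i t₁)ᶜ)]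
    · exact if_congr (validT_iff_left hl hn _ _) rfl rfl
    · intro t₂ _ hne
      rw [if_neg (fun hv => hne (validT_t2_eq hl hn hv))]
    · intro h; exact absurd (Finset.mem_univ _) h
  simp only [inner]
  by_cases hc : t₁.card = 2 * l - 1
  · simp only [hc, true_and, if_true]
    rw [← Finset.sum_filter]
    congr 1
    ext i
    simp
  · simp [hc]


def A0 {n : ℕ} (l : ℕ) (a : Finset (Fin n) → ℝ) (t : Finset (Fin n) × Finset (Fin n) × Fin n) : ℝ :=
  ∑ x ∈ t.1.powersetCard l, a x

def A1 {n : ℕ} (l : ℕ) (a : Finset (Fin n) → ℝ) (t : Finset (Fin n) × Finset (Fin n) × Fin n) : ℝ :=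
  ∑ x ∈ ((insert t.2.2 t.1).powersetCard l).filter (fun x => t.2.2 ∈ x), a x

def B0 {n : ℕ} (l : ℕ) (b : Finset (Fin n) → ℝ) (t : Finset (Fin n) × Finset (Fin n) × Fin n) : ℝ :=
  ∑ y ∈ t.2.1.powersetCard l, b y

def B1 {n : ℕ} (l : ℕ) (b : Finset (Fin n) → ℝ) (t : Finset (Fin n) × Finset (Fin n) × Fin n) : ℝ :=
  ∑ y ∈ ((insert t.2.2 t.2.1).powersetCard l).filter (fun y => t.2.2 ∈ y), b y

lemma card_compl_eq {l : ℕ} (hl : 0 < l) (hn : n = 4 * l - 1) {s : Finset (Fin n)}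
    (hs : s.card = 2 * l - 1) : (sᶜ).card = 2 * l := by
  rw [Finset.card_compl, Fintype.card_fin, hs]; omega

lemma sym1 {l : ℕ} (hl : 0 < l) (hn : n = 4 * l - 1) (a b : Finset (Fin n) → ℝ) :
    (∑ t : Finset (Fin n) × Finset (Fin n) × Fin n,
        if ValidT l t then A1 l a t * B0 l b t else 0)
      = ∑ t : Finset (Fin n) × Finset (Fin n) × Fin n,
        if ValidT l t then A0 l a t * B0 l b t else 0 := by
  rw [sum_valid_right hl hn, sum_valid_right hl hn]
  refine Finset.sum_congr rfl fun t₂ _ => ?_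
  by_cases hc : t₂.card = 2 * l - 1
  · simp only [hc, if_true]
    have hins : ∀ i ∈ t₂ᶜ, insert i ((insert i t₂)ᶜ) = t₂ᶜ := by
      intro i hi
      rw [Finset.compl_insert, Finset.insert_erase hi]
    simp only [A1, A0, B0]
    have : ∑ i ∈ t₂ᶜ, (∑ x ∈ (((insert i ((insert i t₂)ᶜ)).powersetCard l).filter (fun x => i ∈ x)), a x)
            * (∑ y ∈ t₂.powersetCard l, b y)
        = ∑ i ∈ t₂ᶜ, (∑ x ∈ (((t₂ᶜ).powersetCard l).filter (fun x => i ∈ x)), a x)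
            * (∑ y ∈ t₂.powersetCard l, b y) := by
      refine Finset.sum_congr rfl fun i hi => ?_
      rw [hins i hi]
    rw [this, ← Finset.sum_mul, ← Finset.sum_mul]
    congr 1
    have := raz_core l (t₂ᶜ) (card_compl_eq hl hn hc) a
    rw [this]
    refine Finset.sum_congr rfl fun i _ => ?_
    rw [Finset.compl_insert]
  · simp [hc]

lemma sym2 {l : ℕ} (hl : 0 < l) (hn : n = 4 * l - 1) (a b : Finset (Fin n) → ℝ) :
    (∑ t : Finset (Fin n) × Finset (Fin n) × Fin n,
        if ValidT l t then A0 l a t * B1 l b t else 0)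
      = ∑ t : Finset (Fin n) × Finset (Fin n) × Fin n,
        if ValidT l t then A0 l a t * B0 l b t else 0 := by
  rw [sum_valid_left hl hn, sum_valid_left hl hn]
  refine Finset.sum_congr rfl fun t₁ _ => ?_
  by_cases hc : t₁.card = 2 * l - 1
  · simp only [hc, if_true]
    have hins : ∀ i ∈ t₁ᶜ, insert i ((insert i t₁)ᶜ) = t₁ᶜ := by
      intro i hi
      rw [Finset.compl_insert, Finset.insert_erase hi]
    simp only [A0, B0, B1]
    have : ∑ i ∈ t₁ᶜ, (∑ x ∈ t₁.powersetCard l, a x)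
            * (∑ y ∈ (((insert i ((insert i t₁)ᶜ)).powersetCard l).filter (fun y => i ∈ y)), b y)
        = ∑ i ∈ t₁ᶜ, (∑ x ∈ t₁.powersetCard l, a x)
            * (∑ y ∈ (((t₁ᶜ).powersetCard l).filter (fun y => i ∈ y)), b y) := by
      refine Finset.sum_congr rfl fun i hi => ?_
      rw [hins i hi]
    rw [this, ← Finset.mul_sum, ← Finset.mul_sum]
    congr 1
    have := raz_core l (t₁ᶜ) (card_compl_eq hl hn hc) b
    rw [this]
    refine Finset.sum_congr rfl fun i _ => ?_
    rw [Finset.compl_insert]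
  · simp [hc]


lemma razDist_eq (l : ℕ) (t : Finset (Fin n) × Finset (Fin n) × Fin n)
    (x y : Finset (Fin n)) :
    razDist l n (t, x, y) = if (ValidT l t ∧ x ∈ (insert t.2.2 t.1).powersetCard l ∧
        y ∈ (insert t.2.2 t.2.1).powersetCard l) then 1 / ((razSupp l n).card : ℝ) else 0 := by
  unfold razDist razSupp
  refine if_congr ?_ rfl rfl
  simp only [Finset.mem_filter, Finset.mem_univ, true_and, Finset.mem_powersetCard]
  tauto

lemma sum_razDist_X (l : ℕ) (t : Finset (Fin n) × Finset (Fin n) × Fin n)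
    (hv : ValidT l t) (P : Finset (Fin n) → Prop) [DecidablePred P] (g : Finset (Fin n) → ℝ) :
    (∑ p : Finset (Fin n) × Finset (Fin n),
        (if P p.1 then razDist l n (t, p.1, p.2) * g p.1 else 0))
      = ((((insert t.2.2 t.2.1).powersetCard l).card : ℝ) / ((razSupp l n).card : ℝ)) *
        ∑ x ∈ ((insert t.2.2 t.1).powersetCard l).filter P, g x := by
  rw [Fintype.sum_prod_type]
  have hy : ∀ x : Finset (Fin n), (∑ y : Finset (Fin n), razDist l n (t, x, y))
      = if x ∈ (insert t.2.2 t.1).powersetCard l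
        then (((insert t.2.2 t.2.1).powersetCard l).card : ℝ) / ((razSupp l n).card : ℝ) else 0 := by
    intro x
    simp only [razDist_eq, hv, true_and]
    by_cases hx : x ∈ (insert t.2.2 t.1).powersetCard l
    · simp only [hx, true_and, if_true]
      rw [Finset.sum_ite_mem, Finset.univ_inter, Finset.sum_const, nsmul_eq_mul]
      ring
    · simp [hx]
  have step : ∀ x : Finset (Fin n),
      (∑ y : Finset (Fin n), if P x then razDist l n (t, x, y) * g x else 0)
        = if x ∈ ((insert t.2.2 t.1).powersetCard l).filter P then
            ((((insert t.2.2 t.2.1).powersetCard l).card : ℝ) / ((razSupp l n).card : ℝ)) * g x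
          else 0 := by
    intro x
    by_cases hP : P x
    · simp only [hP, if_true, Finset.mem_filter]
      rw [← Finset.sum_mul, hy x]
      by_cases hx : x ∈ (insert t.2.2 t.1).powersetCard l
      · simp [hx, hP]
      · simp [hx]
    · simp [hP, Finset.mem_filter]
  rw [Finset.sum_congr rfl (fun x _ => step x), Finset.sum_ite_mem, Finset.univ_inter,
    Finset.mul_sum]

lemma sum_razDist_Y (l : ℕ) (t : Finset (Fin n) × Finset (Fin n) × Fin n)
    (hv : ValidT l t) (P : Finset (Fin n) → Prop) [DecidablePred P] (g : Finset (Fin n) → ℝ) :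
    (∑ p : Finset (Fin n) × Finset (Fin n),
        (if P p.2 then razDist l n (t, p.1, p.2) * g p.2 else 0))
      = ((((insert t.2.2 t.1).powersetCard l).card : ℝ) / ((razSupp l n).card : ℝ)) *
        ∑ y ∈ ((insert t.2.2 t.2.1).powersetCard l).filter P, g y := by
  rw [Fintype.sum_prod_type, Finset.sum_comm]
  have hx : ∀ y : Finset (Fin n), (∑ x : Finset (Fin n), razDist l n (t, x, y))
      = if y ∈ (insert t.2.2 t.2.1).powersetCard l
        then (((insert t.2.2 t.1).powersetCard l).card : ℝ) / ((razSupp l n).card : ℝ) else 0 := by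
    intro y
    simp only [razDist_eq, hv, true_and]
    by_cases hy : y ∈ (insert t.2.2 t.2.1).powersetCard l
    · simp only [hy, and_true, if_true]
      rw [Finset.sum_ite_mem, Finset.univ_inter, Finset.sum_const, nsmul_eq_mul]
      ring
    · simp [hy]
  have step : ∀ y : Finset (Fin n),
      (∑ x : Finset (Fin n), if P y then razDist l n (t, x, y) * g y else 0)
        = if y ∈ ((insert t.2.2 t.2.1).powersetCard l).filter P then
            ((((insert t.2.2 t.1).powersetCard l).card : ℝ) / ((razSupp l n).card : ℝ)) * g y
          else 0 := by
    intro y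
    by_cases hP : P y
    · simp only [hP, if_true, Finset.mem_filter]
      rw [← Finset.sum_mul, hx y]
      by_cases hy : y ∈ (insert t.2.2 t.2.1).powersetCard l
      · simp [hy, hP]
      · simp [hy]
    · simp [hP, Finset.mem_filter]
  rw [Finset.sum_congr rfl (fun y _ => step y), Finset.sum_ite_mem, Finset.univ_inter,
    Finset.mul_sum]


lemma razSupp_nonempty {l : ℕ} (hl : 0 < l) (hn : n = 4 * l - 1) :
    (razSupp l n).Nonempty := by
  obtain ⟨t₁, -, h1⟩ := Finset.exists_subset_card_eq (s := (Finset.univ : Finset (Fin n))) (n := 2*l-1)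
    (by rw [Finset.card_univ, Fintype.card_fin]; omega)
  have hc1 : (t₁ᶜ).card = 2*l := by
    rw [Finset.card_compl, Fintype.card_fin, h1]; omega
  obtain ⟨t₂, ht₂, h2⟩ := Finset.exists_subset_card_eq (s := t₁ᶜ) (n := 2*l-1) (by omega)
  have hne : (t₁ᶜ \ t₂).Nonempty := by
    rw [← Finset.card_pos, Finset.card_sdiff_of_subset ht₂, hc1, h2]; omega
  obtain ⟨i, hi⟩ := hne
  rw [Finset.mem_sdiff, Finset.mem_compl] at hi
  have hv : ValidT l (t₁, t₂, i) := by
    refine ⟨h1, h2, ?_, hi.1, hi.2⟩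
    rw [Finset.disjoint_left]
    intro z hz hz2
    exact (Finset.mem_compl.mp (ht₂ hz2)) hz
  obtain ⟨x, hx, hxc⟩ := Finset.exists_subset_card_eq (s := insert i t₁) (n := l)
    (by rw [Finset.card_insert_of_notMem hi.1, h1]; omega)
  obtain ⟨y, hy, hyc⟩ := Finset.exists_subset_card_eq (s := insert i t₂) (n := l)
    (by rw [Finset.card_insert_of_notMem hi.2, h2]; omega)
  exact ⟨((t₁, t₂, i), x, y), by
    simp only [razSupp, Finset.mem_filter, Finset.mem_univ, true_and]
    exact ⟨hv, hx, hxc, hy, hyc⟩⟩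

lemma choose_id {l : ℕ} (hl : 0 < l) : (2*l).choose l = 2 * ((2*l-1).choose l) := by
  obtain ⟨k, rfl⟩ : ∃ k, l = k + 1 := ⟨l-1, by omega⟩
  set m := 2*(k+1)-1 with hm
  have h1 : 2*(k+1) = m+1 := by omega
  have hsym : m.choose (m - (k+1)) = m.choose (k+1) := Nat.choose_symm (by omega)
  have hd : m - (k+1) = k := by omega
  rw [hd] at hsym
  rw [h1, Nat.choose_succ_succ]
  simp only [Nat.succ_eq_add_one] at *
  omega

lemma card_pX {l : ℕ} {t : Finset (Fin n) × Finset (Fin n) × Fin n} (hl : 0 < l)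
    (hv : ValidT l t) : ((insert t.2.2 t.1).powersetCard l).card = (2*l).choose l := by
  rw [Finset.card_powersetCard, Finset.card_insert_of_notMem hv.2.2.2.1, hv.1]
  congr 1; omega

lemma card_pY {l : ℕ} {t : Finset (Fin n) × Finset (Fin n) × Fin n} (hl : 0 < l)
    (hv : ValidT l t) : ((insert t.2.2 t.2.1).powersetCard l).card = (2*l).choose l := by
  rw [Finset.card_powersetCard, Finset.card_insert_of_notMem hv.2.2.2.2, hv.2.1]
  congr 1; omega

lemma przT_eq {l : ℕ} (hl : 0 < l) (t : Finset (Fin n) × Finset (Fin n) × Fin n) :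
    przT l n t = if ValidT l t then
      (((2*l).choose l : ℝ) * ((2*l).choose l : ℝ)) / ((razSupp l n).card : ℝ) else 0 := by
  by_cases hv : ValidT l t
  · have h := sum_razDist_X l t hv (fun _ => True) (fun _ => 1)
    simp only [if_true, mul_one] at h
    rw [przT] at *
    rw [h, if_pos hv, Finset.filter_true, Finset.sum_const, nsmul_eq_mul, mul_one,
      card_pX hl hv, card_pY hl hv]
    ring
  · rw [if_neg hv, przT]
    apply Finset.sum_eq_zero
    intro p _
    rw [razDist_eq, if_neg (by tauto)]

lemma prA_eq {l : ℕ} (hl : 0 < l) (hn : n = 4 * l - 1) (a : Finset (Fin n) → ℝ)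
    (t : Finset (Fin n) × Finset (Fin n) × Fin n) (hv : ValidT l t) :
    prA1givenNotInX l n a t = A0 l a t / (((2*l-1).choose l : ℝ)) := by
  have hN : ((razSupp l n).card : ℝ) ≠ 0 := by
    have := Finset.card_pos.mpr (razSupp_nonempty hl hn)
    positivity
  have hK : (((insert t.2.2 t.2.1).powersetCard l).card : ℝ) / ((razSupp l n).card : ℝ) ≠ 0 := by
    rw [card_pY hl hv]
    apply div_ne_zero _ hN
    have := Nat.choose_pos (show l ≤ 2*l by omega)
    positivity
  have hnum := sum_razDist_X l t hv (fun x => t.2.2 ∉ x) a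
  have hden := sum_razDist_X l t hv (fun x => t.2.2 ∉ x) (fun _ => 1)
  simp only [mul_one] at hden
  rw [prA1givenNotInX, hnum, hden, powersetCard_insert_filter_not l t.1 t.2.2 hv.2.2.2.1]
  rw [mul_div_mul_left _ _ hK]
  congr 1
  rw [Finset.sum_const, nsmul_eq_mul, mul_one, Finset.card_powersetCard, hv.1]

lemma prB_eq {l : ℕ} (hl : 0 < l) (hn : n = 4 * l - 1) (b : Finset (Fin n) → ℝ)
    (t : Finset (Fin n) × Finset (Fin n) × Fin n) (hv : ValidT l t) :
    prB1givenNotInY l n b t = B0 l b t / (((2*l-1).choose l : ℝ)) := by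
  have hN : ((razSupp l n).card : ℝ) ≠ 0 := by
    have := Finset.card_pos.mpr (razSupp_nonempty hl hn)
    positivity
  have hK : (((insert t.2.2 t.1).powersetCard l).card : ℝ) / ((razSupp l n).card : ℝ) ≠ 0 := by
    rw [card_pX hl hv]
    apply div_ne_zero _ hN
    have := Nat.choose_pos (show l ≤ 2*l by omega)
    positivity
  have hnum := sum_razDist_Y l t hv (fun y => t.2.2 ∉ y) b
  have hden := sum_razDist_Y l t hv (fun y => t.2.2 ∉ y) (fun _ => 1)
  simp only [mul_one] at hden
  rw [prB1givenNotInY, hnum, hden, powersetCard_insert_filter_not l t.2.1 t.2.2 hv.2.2.2.2]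
  rw [mul_div_mul_left _ _ hK]
  congr 1
  rw [Finset.sum_const, nsmul_eq_mul, mul_one, Finset.card_powersetCard, hv.2.1]


lemma inter_key {l : ℕ} {t : Finset (Fin n) × Finset (Fin n) × Fin n} (hv : ValidT l t)
    {x y : Finset (Fin n)} (hx : x ⊆ insert t.2.2 t.1) (hy : y ⊆ insert t.2.2 t.2.1) :
    ∀ z ∈ x ∩ y, z = t.2.2 := by
  obtain ⟨h1, h2, h3, h4, h5⟩ := hv
  intro z hz
  rw [Finset.mem_inter] at hz
  rcases Finset.mem_insert.mp (hx hz.1) with he | hz1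
  · exact he
  rcases Finset.mem_insert.mp (hy hz.2) with he | hz2
  · exact he
  exact absurd hz2 (Finset.disjoint_left.mp h3 hz1)

lemma lhs_eq {l : ℕ} (hl : 0 < l) (hn : n = 4 * l - 1) (a b : Finset (Fin n) → ℝ) :
    (∑ q : (Finset (Fin n) × Finset (Fin n) × Fin n) × Finset (Fin n) × Finset (Fin n),
        if q.2.1 ∩ q.2.2 = ∅ then razDist l n q * a q.2.1 * b q.2.2 else 0)
      = (1 / ((razSupp l n).card : ℝ)) * ∑ t : Finset (Fin n) × Finset (Fin n) × Fin n,
          if ValidT l t then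
            (A0 l a t * B0 l b t + A0 l a t * B1 l b t + A1 l a t * B0 l b t) else 0 := by
  set N : ℝ := ((razSupp l n).card : ℝ) with hNdef
  rw [Fintype.sum_prod_type, Finset.mul_sum]
  refine Finset.sum_congr rfl fun t _ => ?_
  rw [Fintype.sum_prod_type]
  by_cases hv : ValidT l t
  case neg => simp [razDist_eq, hv]
  case pos =>
  have hx_inner : ∀ x : Finset (Fin n),
      (∑ y : Finset (Fin n), if x ∩ y = ∅ then razDist l n (t, x, y) * a x * b y else 0)
        = if x ∈ (insert t.2.2 t.1).powersetCard l then
            ∑ y ∈ (insert t.2.2 t.2.1).powersetCard l,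
              (if x ∩ y = ∅ then (1 / N) * (a x * b y) else 0)
          else 0 := by
    intro x
    by_cases h1 : x ∈ (insert t.2.2 t.1).powersetCard l
    · rw [if_pos h1]
      have : ∀ y : Finset (Fin n),
          (if x ∩ y = ∅ then razDist l n (t, x, y) * a x * b y else 0)
            = if y ∈ (insert t.2.2 t.2.1).powersetCard l then
                (if x ∩ y = ∅ then (1 / N) * (a x * b y) else 0) else 0 := by
        intro y
        rw [razDist_eq]
        by_cases h2 : y ∈ (insert t.2.2 t.2.1).powersetCard l <;>
          by_cases h3 : x ∩ y = ∅ <;> simp [h1, h2, h3, hv] <;> ring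
      rw [Finset.sum_congr rfl (fun y _ => this y), Finset.sum_ite_mem, Finset.univ_inter]
    · rw [if_neg h1]
      apply Finset.sum_eq_zero
      intro y _
      simp [razDist_eq, h1]
  rw [Finset.sum_congr rfl (fun x _ => hx_inner x), Finset.sum_ite_mem, Finset.univ_inter]
  have hY : ∑ y ∈ (insert t.2.2 t.2.1).powersetCard l, b y = B1 l b t + B0 l b t := by
    rw [← Finset.sum_filter_add_sum_filter_not ((insert t.2.2 t.2.1).powersetCard l)
      (fun y => t.2.2 ∈ y)]
    congr 1
    rw [powersetCard_insert_filter_not l t.2.1 t.2.2 hv.2.2.2.2]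
    rfl
  rw [← Finset.sum_filter_add_sum_filter_not ((insert t.2.2 t.1).powersetCard l)
    (fun x => t.2.2 ∈ x)]
  have hpart1 : ∑ x ∈ ((insert t.2.2 t.1).powersetCard l).filter (fun x => t.2.2 ∈ x),
      ∑ y ∈ (insert t.2.2 t.2.1).powersetCard l, (if x ∩ y = ∅ then (1 / N) * (a x * b y) else 0)
        = (1 / N) * (A1 l a t * B0 l b t) := by
    have hx1 : ∀ x ∈ ((insert t.2.2 t.1).powersetCard l).filter (fun x => t.2.2 ∈ x),
        (∑ y ∈ (insert t.2.2 t.2.1).powersetCard l,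
          (if x ∩ y = ∅ then (1 / N) * (a x * b y) else 0))
          = ((1 / N) * a x) * B0 l b t := by
      intro x hx
      rw [Finset.mem_filter, Finset.mem_powersetCard] at hx
      have hcongr : ∀ y ∈ (insert t.2.2 t.2.1).powersetCard l,
          (if x ∩ y = ∅ then (1 / N) * (a x * b y) else 0)
            = if t.2.2 ∉ y then (1 / N) * (a x * b y) else 0 := by
        intro y hy
        rw [Finset.mem_powersetCard] at hy
        refine if_congr ⟨fun he hiy => ?_, fun hiy => ?_⟩ rfl rfl
        · have : t.2.2 ∈ x ∩ y := Finset.mem_inter.mpr ⟨hx.2, hiy⟩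
          rw [he] at this
          exact absurd this (Finset.notMem_empty _)
        · rw [Finset.eq_empty_iff_forall_notMem]
          intro z hz
          have hzi : z = t.2.2 := inter_key hv hx.1.1 hy.1 z hz
          rw [hzi] at hz
          exact hiy (Finset.mem_inter.mp hz).2
      rw [Finset.sum_congr rfl hcongr, ← Finset.sum_filter,
        powersetCard_insert_filter_not l t.2.1 t.2.2 hv.2.2.2.2]
      simp only [← mul_assoc]
      rw [← Finset.mul_sum]
      rfl
    rw [Finset.sum_congr rfl hx1, ← Finset.sum_mul, ← Finset.mul_sum, A1]
    ring
  have hpart0 : ∑ x ∈ ((insert t.2.2 t.1).powersetCard l).filter (fun x => ¬ t.2.2 ∈ x),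
      ∑ y ∈ (insert t.2.2 t.2.1).powersetCard l, (if x ∩ y = ∅ then (1 / N) * (a x * b y) else 0)
        = (1 / N) * (A0 l a t * (B1 l b t + B0 l b t)) := by
    have hx0 : ∀ x ∈ ((insert t.2.2 t.1).powersetCard l).filter (fun x => ¬ t.2.2 ∈ x),
        (∑ y ∈ (insert t.2.2 t.2.1).powersetCard l,
          (if x ∩ y = ∅ then (1 / N) * (a x * b y) else 0))
          = ((1 / N) * a x) * (B1 l b t + B0 l b t) := by
      intro x hx
      rw [Finset.mem_filter, Finset.mem_powersetCard] at hx
      have hcongr : ∀ y ∈ (insert t.2.2 t.2.1).powersetCard l,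
          (if x ∩ y = ∅ then (1 / N) * (a x * b y) else 0) = ((1 / N) * a x) * b y := by
        intro y hy
        rw [Finset.mem_powersetCard] at hy
        rw [if_pos, mul_assoc]
        rw [Finset.eq_empty_iff_forall_notMem]
        intro z hz
        have hzi : z = t.2.2 := inter_key hv hx.1.1 hy.1 z hz
        rw [hzi] at hz
        exact hx.2 (Finset.mem_inter.mp hz).1
      rw [Finset.sum_congr rfl hcongr, ← Finset.mul_sum, hY]
    rw [Finset.sum_congr rfl hx0, ← Finset.sum_mul, ← Finset.mul_sum]
    have hA0 : ∑ x ∈ ((insert t.2.2 t.1).powersetCard l).filter (fun x => ¬ t.2.2 ∈ x), a x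
        = A0 l a t := by
      rw [powersetCard_insert_filter_not l t.1 t.2.2 hv.2.2.2.1]
      rfl
    rw [hA0]
    ring
  rw [hpart1, hpart0, if_pos hv]
  ring


/-- For `(T,X,Y)` Razborov-distributed (`n = 4l − 1`) and `A, B`
forming the Markov chain `A ↔ X ↔ Y ↔ B`:
`Pr[A = B = 1 ∧ X ∩ Y = ∅]
  = (3/4)·E_{t←T}[ Pr[A=1 ∣ T=t, I∉X] · Pr[B=1 ∣ T=t, I∉Y] ]`. -/
theorem razborov_disjoint_success (l n : ℕ) (hl : 0 < l) (hn : n = 4 * l - 1)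
    (a b : Finset (Fin n) → ℝ)
    (ha : ∀ x, 0 ≤ a x ∧ a x ≤ 1) (hb : ∀ y, 0 ≤ b y ∧ b y ≤ 1) :
    (∑ q : (Finset (Fin n) × Finset (Fin n) × Fin n) × Finset (Fin n) × Finset (Fin n),
        if q.2.1 ∩ q.2.2 = ∅ then razDist l n q * a q.2.1 * b q.2.2 else 0) =
      (3 / 4) * ∑ t : Finset (Fin n) × Finset (Fin n) × Fin n,
        przT l n t * (prA1givenNotInX l n a t * prB1givenNotInY l n b t) := by
  have hN : (0:ℝ) < ((razSupp l n).card : ℝ) := by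
    exact_mod_cast Finset.card_pos.mpr (razSupp_nonempty hl hn)
  have hc0 : (0:ℝ) < (((2*l-1).choose l : ℕ) : ℝ) := by
    exact_mod_cast Nat.choose_pos (show l ≤ 2*l-1 by omega)
  have hterm : ∀ t : Finset (Fin n) × Finset (Fin n) × Fin n,
      przT l n t * (prA1givenNotInX l n a t * prB1givenNotInY l n b t)
        = if ValidT l t then (4 / ((razSupp l n).card : ℝ)) * (A0 l a t * B0 l b t) else 0 := by
    intro t
    by_cases hv : ValidT l t
    · rw [przT_eq hl, prA_eq hl hn a t hv, prB_eq hl hn b t hv, if_pos hv, if_pos hv]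
      have hC : ((2*l).choose l : ℝ) = 2 * (((2*l-1).choose l : ℕ) : ℝ) := by
        exact_mod_cast choose_id hl
      rw [hC]
      field_simp
      ring
    · rw [przT_eq hl, if_neg hv, if_neg hv, zero_mul]
  rw [lhs_eq hl hn a b, Finset.sum_congr rfl (fun t _ => hterm t)]
  have hpull : ∀ t : Finset (Fin n) × Finset (Fin n) × Fin n,
      (if ValidT l t then (4 / ((razSupp l n).card : ℝ)) * (A0 l a t * B0 l b t) else 0)
        = (4 / ((razSupp l n).card : ℝ)) * (if ValidT l t then A0 l a t * B0 l b t else 0) := by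
    intro t; split_ifs <;> simp
  rw [Finset.sum_congr rfl (fun t _ => hpull t), ← Finset.mul_sum]
  have hsplit : ∀ t : Finset (Fin n) × Finset (Fin n) × Fin n,
      (if ValidT l t then
        (A0 l a t * B0 l b t + A0 l a t * B1 l b t + A1 l a t * B0 l b t) else 0)
        = (if ValidT l t then A0 l a t * B0 l b t else 0)
          + (if ValidT l t then A0 l a t * B1 l b t else 0)
          + (if ValidT l t then A1 l a t * B0 l b t else 0) := by
    intro t; split_ifs <;> simp
  rw [Finset.sum_congr rfl (fun t _ => hsplit t), Finset.sum_add_distrib,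
    Finset.sum_add_distrib, sym2 hl hn a b, sym1 hl hn a b]
  field_simp
  ring

end
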